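/- Let G: ℕ → ℝ be a function such that g = lim_{n→∞} G(n)/n exists and is finite, and define J(n) = 2G(n) − G(2n). Then the Hilberg exponent of n ↦ G(n) − n·g is at most the Hilberg exponent of J, where the Hilberg exponent of s is hilb(s) = limsup_{n→∞} log⁺(s(2^n)) / (n log 2), with log⁺ x = log(x+1) for x ≥ 0 and log⁺ x = 0 for x < 0. -/

import Mathlib

noncomputable def logPlus (x : ℝ) : ℝ := if 0 ≤ x then Real.log (x + 1) else 0

/-- The Hilberg exponent of a sequence. -/
noncomputable def hilb (s : ℕ → ℝ) : ℝ :=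
  Filter.limsup (fun n : ℕ => logPlus (s (2 ^ n)) / (n * Real.log 2)) Filter.atTop

open Filter Real

lemma logPlus_nonneg (x : ℝ) : 0 ≤ logPlus x := by
  unfold logPlus
  split
  · exact Real.log_nonneg (by linarith)
  · exact le_refl _

lemma logPlus_le {x M : ℝ} (hM : 0 ≤ M) (h : x ≤ M) : logPlus x ≤ Real.log (M + 1) := by
  unfold logPlus
  split
  · exact Real.log_le_log (by linarith) (by linarith)
  · exact Real.log_nonneg (by linarith)

lemma hilb_le_of_bound (G : ℕ → ℝ) (g c K : ℝ) (hK : 0 < K) (hc : 0 < c)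
    (hb : ∀ᶠ n : ℕ in atTop, G (2 ^ n) - (2 ^ n : ℕ) * g ≤ K * (2 : ℝ) ^ (c * n)) :
    hilb (fun n => G n - n * g) ≤ c := by
  have hlog2 : 0 < Real.log 2 := Real.log_pos one_lt_two
  unfold hilb
  refine le_of_forall_pos_le_add fun ε hε => ?_
  have ha0 : ∀ n : ℕ, 0 ≤ logPlus (G (2 ^ n) - ((2:ℕ) ^ n : ℕ) * g) / (n * Real.log 2) :=
    fun n => div_nonneg (logPlus_nonneg _) (by positivity)
  refine Filter.limsup_le_of_le (Filter.isCoboundedUnder_le_of_le _ ha0) ?_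
  have h1 : ∀ᶠ n : ℕ in atTop, Real.log (K + 1) ≤ ε * ((n : ℝ) * Real.log 2) := by
    have ht : Tendsto (fun n : ℕ => (n : ℝ) * Real.log 2) atTop atTop :=
      tendsto_natCast_atTop_atTop.atTop_mul_const hlog2
    filter_upwards [ht.eventually_ge_atTop (Real.log (K + 1) / ε)] with n hn
    rw [div_le_iff₀ hε] at hn
    linarith [hn]
  filter_upwards [hb, h1, eventually_ge_atTop 1] with n hn h1n hn1
  have hnl : 0 < (n : ℝ) * Real.log 2 := by
    have : (1:ℝ) ≤ (n : ℝ) := by exact_mod_cast hn1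
    positivity
  have hrp : (1 : ℝ) ≤ (2 : ℝ) ^ (c * n) :=
    Real.one_le_rpow one_le_two (by positivity)
  have step1 : logPlus (G (2 ^ n) - ((2:ℕ) ^ n : ℕ) * g) ≤ Real.log (K * (2:ℝ) ^ (c * n) + 1) :=
    logPlus_le (by positivity) hn
  have step2 : Real.log (K * (2:ℝ) ^ (c * n) + 1) ≤ Real.log ((K + 1) * (2:ℝ) ^ (c * n)) := by
    apply Real.log_le_log (by positivity)
    nlinarith
  have step3 : Real.log ((K + 1) * (2:ℝ) ^ (c * n)) = Real.log (K + 1) + c * n * Real.log 2 := by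
    rw [Real.log_mul (by positivity) (by positivity), Real.log_rpow two_pos]
  show logPlus (G (2 ^ n) - ((2:ℕ) ^ n : ℕ) * g) / (n * Real.log 2) ≤ c + ε
  rw [div_le_iff₀ hnl]
  calc logPlus (G (2 ^ n) - ((2:ℕ) ^ n : ℕ) * g)
      ≤ Real.log (K + 1) + c * n * Real.log 2 := by linarith
    _ ≤ ε * ((n : ℝ) * Real.log 2) + c * ((n:ℝ) * Real.log 2) := by linarith [h1n]
    _ = (c + ε) * ((n:ℝ) * Real.log 2) := by ring
theorem hilberg_redundancy_le (G : ℕ → ℝ) (g : ℝ)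
    (hg : Filter.Tendsto (fun n : ℕ => G n / n) Filter.atTop (nhds g)) :
    hilb (fun n => G n - n * g) ≤ hilb (fun n => 2 * G n - G (2 * n)) := by
  have hlog2 : 0 < Real.log 2 := Real.log_pos one_lt_two
  have hG2 : Tendsto (fun n : ℕ => G (2 ^ n) / ((2 : ℕ) ^ n : ℕ)) atTop (nhds g) :=
    hg.comp (tendsto_pow_atTop_atTop_of_one_lt one_lt_two)
  -- auxiliary bound : hilb (G - n g) ≤ 1
  have haux1 : hilb (fun n => G n - n * g) ≤ 1 := by
    apply hilb_le_of_bound G g 1 1 one_pos one_pos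
    filter_upwards [hG2.eventually (eventually_le_nhds (lt_add_one g))] with n hn
    have hp : (0:ℝ) < ((2:ℕ) ^ n : ℕ) := by positivity
    rw [div_le_iff₀ hp] at hn
    have h2 : (((2:ℕ) ^ n : ℕ) : ℝ) = (2:ℝ) ^ ((1:ℝ) * (n:ℝ)) := by
      rw [one_mul, Real.rpow_natCast]; push_cast; ring
    calc G (2 ^ n) - ((2:ℕ) ^ n : ℕ) * g ≤ ((2:ℕ) ^ n : ℕ) := by nlinarith
      _ = 1 * (2:ℝ) ^ ((1:ℝ) * (n:ℝ)) := by rw [← h2]; ring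
  -- the sequence defining hilb of J
  set b : ℕ → ℝ := fun n : ℕ =>
    logPlus (2 * G (2 ^ n) - G (2 * 2 ^ n)) / (n * Real.log 2) with hbdef
  have hhilbb : hilb (fun n => 2 * G n - G (2 * n)) = limsup b atTop := rfl
  -- J(2^n)/2^n → 0
  have hJt : Tendsto (fun n : ℕ => (2 * G (2 ^ n) - G (2 * 2 ^ n)) / ((2:ℕ) ^ n : ℕ))
      atTop (nhds 0) := by
    have h1 : Tendsto (fun n : ℕ =>
        2 * (G (2 ^ n) / ((2:ℕ) ^ n : ℕ)) - 2 * (G (2 ^ (n+1)) / ((2:ℕ) ^ (n+1) : ℕ)))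
        atTop (nhds (2 * g - 2 * g)) :=
      (hG2.const_mul 2).sub ((hG2.comp (tendsto_add_atTop_nat 1)).const_mul 2)
    rw [show (2:ℝ) * g - 2 * g = 0 from by ring] at h1
    refine h1.congr fun n => ?_
    rw [show (2 * 2 ^ n : ℕ) = 2 ^ (n+1) from by ring]
    push_cast
    rw [pow_succ]
    have p1 : ((2:ℝ)) ^ n ≠ 0 := by positivity
    field_simp
    ring
  -- b is bounded above
  have hJb : ∀ᶠ n : ℕ in atTop, 2 * G (2 ^ n) - G (2 * 2 ^ n) ≤ ((2:ℕ) ^ n : ℕ) := by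
    filter_upwards [hJt.eventually (eventually_le_nhds one_pos)] with n hn
    have p1 : (0:ℝ) < ((2:ℕ) ^ n : ℕ) := by positivity
    rw [div_le_iff₀ p1] at hn
    linarith
  have bb : IsBoundedUnder (· ≤ ·) atTop b := by
    apply isBoundedUnder_of_eventually_le (a := (2:ℝ))
    filter_upwards [hJb, eventually_ge_atTop 1] with n hn hn1
    have hn1' : (1:ℝ) ≤ (n:ℝ) := by exact_mod_cast hn1
    have hnl : 0 < (n:ℝ) * Real.log 2 := by positivity
    show logPlus (2 * G (2 ^ n) - G (2 * 2 ^ n)) / (n * Real.log 2) ≤ 2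
    rw [div_le_iff₀ hnl]
    have l1 : logPlus (2 * G (2 ^ n) - G (2 * 2 ^ n)) ≤ Real.log (((2:ℕ) ^ n : ℕ) + 1) :=
      logPlus_le (by positivity) hn
    have l2 : Real.log (((2:ℕ) ^ n : ℕ) + 1) ≤ Real.log ((2:ℝ) ^ (n+1)) := by
      apply Real.log_le_log (by positivity)
      push_cast
      have e : (2:ℝ) ^ (n+1) = 2 * 2 ^ n := by ring
      have hone : (1:ℝ) ≤ 2 ^ n := one_le_pow₀ one_le_two
      linarith
    have l3 : Real.log ((2:ℝ) ^ (n+1)) = ((n:ℝ) + 1) * Real.log 2 := by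
      rw [Real.log_pow]; push_cast; ring
    nlinarith
  have hb0 : ∀ n, 0 ≤ b n := fun n => div_nonneg (logPlus_nonneg _) (by positivity)
  have hlim0 : (0:ℝ) ≤ limsup b atTop :=
    le_limsup_of_frequently_le (Frequently.of_forall hb0) bb
  -- main claim
  have claim : ∀ c : ℝ, limsup b atTop < c → c < 1 → hilb (fun n => G n - n * g) ≤ c := by
    intro c hc1 hc2
    have hc0 : 0 < c := lt_of_le_of_lt hlim0 hc1
    have hev : ∀ᶠ n : ℕ in atTop, b n < c := eventually_lt_of_limsup_lt hc1 bb
    have hJle : ∀ᶠ n : ℕ in atTop, 2 * G (2 ^ n) - G (2 * 2 ^ n) ≤ (2:ℝ) ^ (c * n) := by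
      filter_upwards [hev, eventually_ge_atTop 1] with n hn hn1
      have hn1' : (1:ℝ) ≤ (n:ℝ) := by exact_mod_cast hn1
      have hnl : 0 < (n:ℝ) * Real.log 2 := by positivity
      have h2 : logPlus (2 * G (2 ^ n) - G (2 * 2 ^ n)) < c * ((n:ℝ) * Real.log 2) := by
        rw [hbdef] at hn
        simp only [] at hn
        rwa [div_lt_iff₀ hnl] at hn
      have hpos : (0:ℝ) < (2:ℝ) ^ (c * n) := by positivity
      by_cases hs : 0 ≤ 2 * G (2 ^ n) - G (2 * 2 ^ n)
      · have hlog : Real.log (2 * G (2 ^ n) - G (2 * 2 ^ n) + 1) < Real.log ((2:ℝ) ^ (c * (n:ℝ))) := by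
          rw [Real.log_rpow two_pos]
          have : logPlus (2 * G (2 ^ n) - G (2 * 2 ^ n))
              = Real.log (2 * G (2 ^ n) - G (2 * 2 ^ n) + 1) := by
            unfold logPlus; rw [if_pos hs]
          rw [this] at h2
          linarith
        have := (Real.log_lt_log_iff (by linarith) (by positivity)).mp hlog
        linarith
      · push_neg at hs
        linarith
    obtain ⟨N, hN⟩ := eventually_atTop.mp hJle
    set r : ℝ := (2:ℝ) ^ (c - 1) with hrdef
    have hr0 : 0 < r := Real.rpow_pos_of_pos two_pos _
    have hr1 : r < 1 := Real.rpow_lt_one_of_one_lt_of_neg one_lt_two (by linarith)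
    have h1r : (0:ℝ) < 1 - r := by linarith
    set C : ℝ := 1 / (2 * (1 - r)) with hCdef
    have hC0 : 0 < C := by rw [hCdef]; positivity
    have hCr : C * (1 - r) = 1 / 2 := by
      rw [hCdef]; field_simp
    have hq : ∀ k : ℕ, (2:ℝ) ^ (c * (k:ℝ)) = ((2:ℝ) ^ c) ^ k := fun k => by
      rw [← Real.rpow_natCast ((2:ℝ) ^ c) k, ← Real.rpow_mul (le_of_lt two_pos)]
    have hrq : r = (2:ℝ) ^ c / 2 := by
      rw [hrdef, Real.rpow_sub two_pos, Real.rpow_one]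
    have hqpos : (0:ℝ) < (2:ℝ) ^ c := Real.rpow_pos_of_pos two_pos _
    have hexp : ∀ n m : ℕ, (2:ℝ) ^ (c * ((n + m : ℕ) : ℝ)) / (2:ℝ) ^ (m+1)
        = (2:ℝ) ^ (c * (n:ℝ)) * r ^ m / 2 := by
      intro n m
      rw [show c * ((n + m : ℕ) : ℝ) = c * (n:ℝ) + c * (m:ℝ) from by push_cast; ring,
        Real.rpow_add two_pos, hq m, hrq, div_pow]
      have h2m : ((2:ℝ)) ^ m ≠ 0 := by positivity
      field_simp
      ring
    -- key induction
    have key : ∀ n, N ≤ n → ∀ m : ℕ,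
        G (2 ^ n) - G (2 ^ (n + m)) / 2 ^ m ≤ C * (2:ℝ) ^ (c * (n:ℝ)) * (1 - r ^ m) := by
      intro n hn m
      induction m with
      | zero => simp
      | succ m ih =>
        have hJ := hN (n + m) (le_trans hn (Nat.le_add_right n m))
        rw [show (2 * 2 ^ (n + m) : ℕ) = 2 ^ (n + (m + 1)) from by ring] at hJ
        have h2m : ((2:ℝ)) ^ m ≠ 0 := by positivity
        have hsplit : G (2 ^ n) - G (2 ^ (n + (m+1))) / 2 ^ (m+1)
            = (G (2 ^ n) - G (2 ^ (n + m)) / 2 ^ m)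
              + (2 * G (2 ^ (n + m)) - G (2 ^ (n + (m+1)))) / 2 ^ (m+1) := by
          field_simp
          ring
        rw [hsplit]
        have hJ2 : (2 * G (2 ^ (n + m)) - G (2 ^ (n + (m+1)))) / 2 ^ (m+1)
            ≤ (2:ℝ) ^ (c * (n:ℝ)) * r ^ m / 2 := by
          rw [← hexp n m]
          exact div_le_div_of_nonneg_right hJ (by positivity) |>.trans_eq rfl
        have hP : (0:ℝ) < (2:ℝ) ^ (c * (n:ℝ)) := by positivity
        have heq : C * (2:ℝ) ^ (c * (n:ℝ)) * (1 - r ^ (m+1))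
            = C * (2:ℝ) ^ (c * (n:ℝ)) * (1 - r ^ m) + (2:ℝ) ^ (c * (n:ℝ)) * r ^ m / 2 := by
          rw [pow_succ]
          linear_combination ((2:ℝ) ^ (c * (n:ℝ)) * r ^ m) * hCr
        linarith
    -- take the limit in m
    have bound : ∀ᶠ n : ℕ in atTop, G (2 ^ n) - ((2:ℕ) ^ n : ℕ) * g ≤ C * (2:ℝ) ^ (c * n) := by
      rw [eventually_atTop]
      refine ⟨N, fun n hn => ?_⟩
      have h1 : Tendsto (fun m : ℕ => (G (2 ^ (m + n)) / ((2:ℕ) ^ (m + n) : ℕ)) * ((2:ℕ) ^ n : ℕ))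
          atTop (nhds (g * ((2:ℕ) ^ n : ℕ))) :=
        (hG2.comp (tendsto_add_atTop_nat n)).mul_const _
      have h2 : Tendsto (fun m : ℕ => G (2 ^ (n + m)) / 2 ^ m)
          atTop (nhds ((((2:ℕ) ^ n : ℕ) : ℝ) * g)) := by
        rw [show (((2:ℕ) ^ n : ℕ) : ℝ) * g = g * ((2:ℕ) ^ n : ℕ) from by ring]
        refine h1.congr fun m => ?_
        rw [Nat.add_comm n m]
        have h2m : ((2:ℝ)) ^ m ≠ 0 := by positivity
        have h2n : ((2:ℝ)) ^ n ≠ 0 := by positivity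
        push_cast
        rw [pow_add]
        field_simp
        ring
      have hlim : Tendsto (fun m : ℕ => G (2 ^ n) - G (2 ^ (n + m)) / 2 ^ m)
          atTop (nhds (G (2 ^ n) - ((2:ℕ) ^ n : ℕ) * g)) :=
        tendsto_const_nhds.sub h2
      refine le_of_tendsto hlim (Eventually.of_forall fun m => ?_)
      have hP : (0:ℝ) < (2:ℝ) ^ (c * (n:ℝ)) := by positivity
      have hrm : (0:ℝ) ≤ r ^ m := pow_nonneg (le_of_lt hr0) m
      calc G (2 ^ n) - G (2 ^ (n + m)) / 2 ^ m
          ≤ C * (2:ℝ) ^ (c * (n:ℝ)) * (1 - r ^ m) := key n hn m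
        _ ≤ C * (2:ℝ) ^ (c * n) := by nlinarith [mul_nonneg (mul_nonneg hC0.le hP.le) hrm]
    exact hilb_le_of_bound G g c C hC0 hc0 bound
  -- assemble
  rw [hhilbb]
  by_cases hcase : 1 ≤ limsup b atTop
  · exact le_trans haux1 hcase
  · push_neg at hcase
    by_contra hcon
    push_neg at hcon
    set X := hilb (fun n => G n - n * g) with hX
    have h1 : limsup b atTop < min X 1 := lt_min hcon hcase
    set c := (limsup b atTop + min X 1) / 2 with hc
    have hc1 : limsup b atTop < c := by rw [hc]; linarith
    have hc2 : c < 1 := by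
      have h2 : min X 1 ≤ 1 := min_le_right _ _
      rw [hc]; linarith
    have h3 := claim c hc1 hc2
    have hcX : c < X := by
      have h4 : min X 1 ≤ X := min_le_left _ _
      rw [hc]; linarith
    exact absurd h3 (not_le.mpr hcX)
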